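/- Define S(x,y) := (1/√(2π)) e^{-(x-y)²/2}, D(x,y) := -((x-y)/√(2π)) e^{-(x-y)²/2}, and Ĩ(x,y) := -(1/2) erf((x-y)/√2) + (1/2) sgn(x-y). Then for every R ≥ 0, √(2/π) · R - ∫_{-R}^{R} ∫_{-R}^{R} ( S(x,y)² + Ĩ(x,y) · D(x,y) ) dx dy = 2√(2/π) · R - (2/√π) · R · erf(2R) - (1/2) erf(√2 · R) + (1/4) erf(√2 · R)² + (1/π) (1 - e^{-4R²}). (The left-hand side is the number variance of the real eigenvalues of the infinite real Ginibre ensemble in the interval (-R, R), expressed through the limiting correlation kernel.) -/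

import Mathlib

open MeasureTheory Real Filter

/-- The error function `erf(x) = (2/√π) ∫₀^x e^(-t²) dt`. -/
noncomputable def erf (x : ℝ) : ℝ := (2 / Real.sqrt π) * ∫ t in (0:ℝ)..x, Real.exp (-t ^ 2)

/-- The limiting kernel `S(x,y) = (1/√(2π)) e^{-(x-y)²/2}` for real eigenvalues of the GinOE. -/
noncomputable def Skern (x y : ℝ) : ℝ := (1 / Real.sqrt (2 * π)) * Real.exp (-(x - y) ^ 2 / 2)

/-- `D(x,y) = -((x-y)/√(2π)) e^{-(x-y)²/2}`. -/
noncomputable def Dkern (x y : ℝ) : ℝ := -((x - y) / Real.sqrt (2 * π)) * Real.exp (-(x - y) ^ 2 / 2)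

/-- `Ĩ(x,y) = -(1/2) erf((x-y)/√2) + (1/2) sgn(x-y)`. -/
noncomputable def Ikern (x y : ℝ) : ℝ :=
  -(1 / 2) * erf ((x - y) / Real.sqrt 2) + (1 / 2) * Real.sign (x - y)

lemma erf_hasDerivAt (x : ℝ) : HasDerivAt erf (2 / Real.sqrt π * Real.exp (-x ^ 2)) x := by
  have hc : Continuous fun t : ℝ => Real.exp (-t ^ 2) := by continuity
  have h := (hc.integral_hasStrictDerivAt 0 x).hasDerivAt
  exact h.const_mul (2 / Real.sqrt π)
lemma erf_cont : Continuous erf :=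
  continuous_iff_continuousAt.2 fun x => (erf_hasDerivAt x).continuousAt
lemma erf_zero : erf 0 = 0 := by simp [erf]
lemma erf_neg (x : ℝ) : erf (-x) = -erf x := by
  unfold erf
  have h := intervalIntegral.integral_comp_neg (a := (0:ℝ)) (b := x)
    (f := fun t => Real.exp (-t ^ 2))
  simp only [neg_neg, neg_zero] at h
  have h2 : (∫ t in (0:ℝ)..x, Real.exp (-(-t) ^ 2)) = ∫ t in (0:ℝ)..x, Real.exp (-t ^ 2) := by
    congr 1; ext t; ring_nf
  rw [h2] at h
  have h3 := intervalIntegral.integral_symm (μ := volume) (f := fun t => Real.exp (-t ^ 2))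
    (a := (-x)) (b := 0)
  have h4 := intervalIntegral.integral_symm (μ := volume) (f := fun t => Real.exp (-t ^ 2))
    (a := (0:ℝ)) (b := x)
  have hA : (∫ t in (0:ℝ)..(-x), Real.exp (-t ^ 2)) = -∫ t in (0:ℝ)..x, Real.exp (-t ^ 2) := by
    linarith
  rw [hA]; ring
noncomputable def phi (u : ℝ) : ℝ := ∫ t in (0:ℝ)..u, |t| * Real.exp (-t ^ 2 / 2)

lemma phi_hasDerivAt (x : ℝ) : HasDerivAt phi (|x| * Real.exp (-x ^ 2 / 2)) x := by
  have hc : Continuous fun t : ℝ => |t| * Real.exp (-t ^ 2 / 2) := by continuity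
  exact (hc.integral_hasStrictDerivAt 0 x).hasDerivAt

lemma phi_cont : Continuous phi :=
  continuous_iff_continuousAt.2 fun x => (phi_hasDerivAt x).continuousAt

lemma expq_hasDerivAt (x : ℝ) :
    HasDerivAt (fun u : ℝ => Real.exp (-u ^ 2 / 2)) (-x * Real.exp (-x ^ 2 / 2)) x := by
  have h : HasDerivAt (fun u : ℝ => -u ^ 2 / 2) (-x) x := by
    have := ((hasDerivAt_pow 2 x).neg).div_const 2
    simpa using this.congr_deriv (by ring)
  simpa [mul_comm] using h.exp

lemma expsq_hasDerivAt (x : ℝ) :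
    HasDerivAt (fun u : ℝ => Real.exp (-u ^ 2)) (-2 * x * Real.exp (-x ^ 2)) x := by
  have h : HasDerivAt (fun u : ℝ => -u ^ 2) (-2 * x) x := by
    exact ((hasDerivAt_pow 2 x).neg).congr_deriv (by ring)
  simpa [mul_comm] using h.exp

lemma erfs_hasDerivAt (x : ℝ) :
    HasDerivAt (fun u : ℝ => erf (u / Real.sqrt 2))
      (Real.sqrt 2 / Real.sqrt π * Real.exp (-x ^ 2 / 2)) x := by
  have h := (erf_hasDerivAt (x / Real.sqrt 2)).comp x ((hasDerivAt_id x).div_const (Real.sqrt 2))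
  have hs : Real.sqrt 2 ≠ 0 := by positivity
  have h1 : -(x / Real.sqrt 2) ^ 2 = -x ^ 2 / 2 := by
    rw [div_pow, Real.sq_sqrt (by norm_num : (0:ℝ) ≤ 2)]; ring
  have h2 : 2 / Real.sqrt π * Real.exp (-x ^ 2 / 2) * (1 / Real.sqrt 2)
      = Real.sqrt 2 / Real.sqrt π * Real.exp (-x ^ 2 / 2) := by
    have h22 : Real.sqrt 2 * Real.sqrt 2 = 2 := Real.mul_self_sqrt (by norm_num)
    have hp : Real.sqrt π ≠ 0 := by positivity
    field_simp
    linear_combination (-1) * h22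
  rw [h1] at h
  rw [← h2]
  exact h

lemma phi_nonneg {u : ℝ} (hu : 0 ≤ u) : phi u = 1 - Real.exp (-u ^ 2 / 2) := by
  unfold phi
  rw [intervalIntegral.integral_congr (g := fun t => t * Real.exp (-t ^ 2 / 2))
    (by intro t ht
        rw [Set.uIcc_of_le hu] at ht
        simp only
        rw [abs_of_nonneg ht.1])]
  have := intervalIntegral.integral_eq_sub_of_hasDerivAt
    (f := fun t : ℝ => -Real.exp (-t ^ 2 / 2)) (f' := fun t => t * Real.exp (-t ^ 2 / 2))
    (a := 0) (b := u)
    (fun t _ => by exact (expq_hasDerivAt t).neg.congr_deriv (by ring))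
    ((by continuity : Continuous fun t : ℝ => t * Real.exp (-t ^ 2 / 2)).intervalIntegrable 0 u)
  rw [this]; norm_num; ring

lemma phi_neg (u : ℝ) : phi (-u) = -phi u := by
  unfold phi
  have h := intervalIntegral.integral_comp_neg (a := (0:ℝ)) (b := u)
    (f := fun t => |t| * Real.exp (-t ^ 2 / 2))
  simp only [neg_neg, neg_zero] at h
  have h2 : (∫ t in (0:ℝ)..u, |(-t)| * Real.exp (-(-t) ^ 2 / 2))
      = ∫ t in (0:ℝ)..u, |t| * Real.exp (-t ^ 2 / 2) := by
    congr 1; ext t; rw [abs_neg, neg_sq]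
  rw [h2] at h
  have h3 := intervalIntegral.integral_symm (μ := volume)
    (f := fun t => |t| * Real.exp (-t ^ 2 / 2)) (a := (-u)) (b := 0)
  have h4 := intervalIntegral.integral_symm (μ := volume)
    (f := fun t => |t| * Real.exp (-t ^ 2 / 2)) (a := (0:ℝ)) (b := u)
  linarith

lemma phi_nonpos {u : ℝ} (hu : u ≤ 0) : phi u = -(1 - Real.exp (-u ^ 2 / 2)) := by
  have h := phi_neg (-u)
  rw [neg_neg] at h
  rw [h, phi_nonneg (by linarith : (0:ℝ) ≤ -u), neg_sq]
lemma sq2 : Real.sqrt 2 * Real.sqrt 2 = 2 := Real.mul_self_sqrt (by norm_num)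
lemma sqp : Real.sqrt π * Real.sqrt π = π := Real.mul_self_sqrt pi_pos.le
lemma sp_pos : 0 < Real.sqrt π := Real.sqrt_pos.2 pi_pos
lemma s2_pos : (0:ℝ) < Real.sqrt 2 := Real.sqrt_pos.2 (by norm_num)

lemma sp2 : Real.sqrt π ^ 2 = π := Real.sq_sqrt pi_pos.le
lemma ss2 : Real.sqrt 2 ^ 2 = 2 := Real.sq_sqrt (by norm_num)
lemma sp3 : Real.sqrt π ^ 3 = π * Real.sqrt π := by
  rw [show Real.sqrt π ^ 3 = Real.sqrt π ^ 2 * Real.sqrt π by ring, sp2]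
lemma sp4 : Real.sqrt π ^ 4 = π ^ 2 := by
  rw [show Real.sqrt π ^ 4 = (Real.sqrt π ^ 2) ^ 2 by ring, sp2]
lemma sp5 : Real.sqrt π ^ 5 = π ^ 2 * Real.sqrt π := by
  rw [show Real.sqrt π ^ 5 = (Real.sqrt π ^ 2) ^ 2 * Real.sqrt π by ring, sp2]
lemma sp6 : Real.sqrt π ^ 6 = π ^ 3 := by
  rw [show Real.sqrt π ^ 6 = (Real.sqrt π ^ 2) ^ 3 by ring, sp2]
lemma sp7 : Real.sqrt π ^ 7 = π ^ 3 * Real.sqrt π := by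
  rw [show Real.sqrt π ^ 7 = (Real.sqrt π ^ 2) ^ 3 * Real.sqrt π by ring, sp2]
lemma sp8 : Real.sqrt π ^ 8 = π ^ 4 := by
  rw [show Real.sqrt π ^ 8 = (Real.sqrt π ^ 2) ^ 4 by ring, sp2]
lemma ss3 : Real.sqrt 2 ^ 3 = 2 * Real.sqrt 2 := by rw [show Real.sqrt 2 ^ 3 = Real.sqrt 2 ^ 2 * Real.sqrt 2 by ring, ss2]
lemma ss4 : Real.sqrt 2 ^ 4 = 4 := by rw [show Real.sqrt 2 ^ 4 = (Real.sqrt 2 ^ 2) ^ 2 by ring, ss2]; norm_num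
lemma ss5 : Real.sqrt 2 ^ 5 = 4 * Real.sqrt 2 := by rw [show Real.sqrt 2 ^ 5 = (Real.sqrt 2 ^ 2) ^ 2 * Real.sqrt 2 by ring, ss2]; norm_num
lemma ss6 : Real.sqrt 2 ^ 6 = 8 := by rw [show Real.sqrt 2 ^ 6 = (Real.sqrt 2 ^ 2) ^ 3 by ring, ss2]; norm_num
lemma ss7 : Real.sqrt 2 ^ 7 = 8 * Real.sqrt 2 := by rw [show Real.sqrt 2 ^ 7 = (Real.sqrt 2 ^ 2) ^ 3 * Real.sqrt 2 by ring, ss2]; norm_num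
lemma ss8 : Real.sqrt 2 ^ 8 = 16 := by rw [show Real.sqrt 2 ^ 8 = (Real.sqrt 2 ^ 2) ^ 4 by ring, ss2]; norm_num

noncomputable def Fk (u : ℝ) : ℝ :=
  1 / (2 * (Real.sqrt π * Real.sqrt π)) * Real.exp (-u ^ 2)
  + 1 / (2 * (Real.sqrt 2 * Real.sqrt π)) * (u * erf (u / Real.sqrt 2) * Real.exp (-u ^ 2 / 2))
  - 1 / (2 * (Real.sqrt 2 * Real.sqrt π)) * (|u| * Real.exp (-u ^ 2 / 2))

noncomputable def Gk (u : ℝ) : ℝ :=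
  1 / (2 * Real.sqrt π) * erf u
  - 1 / (2 * (Real.sqrt 2 * Real.sqrt π)) * (erf (u / Real.sqrt 2) * Real.exp (-u ^ 2 / 2))
  - 1 / (2 * (Real.sqrt 2 * Real.sqrt π)) * phi u

noncomputable def Gp (u : ℝ) : ℝ :=
  1 / (2 * Real.sqrt π) * erf u
  - 1 / (2 * (Real.sqrt 2 * Real.sqrt π)) * (erf (u / Real.sqrt 2) * Real.exp (-u ^ 2 / 2))
  - 1 / (2 * (Real.sqrt 2 * Real.sqrt π)) * (1 - Real.exp (-u ^ 2 / 2))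

noncomputable def Gm (u : ℝ) : ℝ :=
  1 / (2 * Real.sqrt π) * erf u
  - 1 / (2 * (Real.sqrt 2 * Real.sqrt π)) * (erf (u / Real.sqrt 2) * Real.exp (-u ^ 2 / 2))
  + 1 / (2 * (Real.sqrt 2 * Real.sqrt π)) * (1 - Real.exp (-u ^ 2 / 2))

noncomputable def Hp (u : ℝ) : ℝ :=
  1 / (2 * Real.sqrt π) * (u * erf u + 1 / Real.sqrt π * Real.exp (-u ^ 2))
  - 1 / (2 * (Real.sqrt 2 * Real.sqrt π)) * (Real.sqrt π / (2 * Real.sqrt 2))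
      * erf (u / Real.sqrt 2) ^ 2
  - 1 / (2 * (Real.sqrt 2 * Real.sqrt π))
      * (u - Real.sqrt π / Real.sqrt 2 * erf (u / Real.sqrt 2))

noncomputable def Hm (u : ℝ) : ℝ :=
  1 / (2 * Real.sqrt π) * (u * erf u + 1 / Real.sqrt π * Real.exp (-u ^ 2))
  - 1 / (2 * (Real.sqrt 2 * Real.sqrt π)) * (Real.sqrt π / (2 * Real.sqrt 2))
      * erf (u / Real.sqrt 2) ^ 2
  + 1 / (2 * (Real.sqrt 2 * Real.sqrt π))
      * (u - Real.sqrt π / Real.sqrt 2 * erf (u / Real.sqrt 2))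

lemma Gk_hasDerivAt (u : ℝ) : HasDerivAt Gk (Fk u) u := by
  have h1 := (erf_hasDerivAt u).const_mul (1 / (2 * Real.sqrt π))
  have h2 := ((erfs_hasDerivAt u).mul (expq_hasDerivAt u)).const_mul
    (1 / (2 * (Real.sqrt 2 * Real.sqrt π)))
  have h3 := (phi_hasDerivAt u).const_mul (1 / (2 * (Real.sqrt 2 * Real.sqrt π)))
  have h := (h1.sub h2).sub h3
  have hE : Real.exp (-u ^ 2 / 2) * Real.exp (-u ^ 2 / 2) = Real.exp (-u ^ 2) := by
    rw [← Real.exp_add]; ring_nf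
  refine h.congr_deriv ?_
  symm
  unfold Fk
  have hp := sp_pos.ne'
  have hs := s2_pos.ne'
  field_simp
  rw [← hE]
  ring_nf
  try simp only [sp2, sp3, sp4, sp5, sp6, sp7, sp8, ss2, ss3, ss4, ss5, ss6, ss7, ss8]
  try ring_nf

lemma Hp_hasDerivAt (u : ℝ) : HasDerivAt Hp (Gp u) u := by
  have t1 := (((hasDerivAt_id u).mul (erf_hasDerivAt u)).add
    ((expsq_hasDerivAt u).const_mul (1 / Real.sqrt π))).const_mul (1 / (2 * Real.sqrt π))
  have t2 := (((erfs_hasDerivAt u).pow 2).const_mul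
    (1 / (2 * (Real.sqrt 2 * Real.sqrt π)) * (Real.sqrt π / (2 * Real.sqrt 2))))
  have t3 := (((hasDerivAt_id u).sub ((erfs_hasDerivAt u).const_mul
    (Real.sqrt π / Real.sqrt 2))).const_mul (1 / (2 * (Real.sqrt 2 * Real.sqrt π))))
  have h := (t1.sub t2).sub t3
  refine h.congr_deriv ?_
  symm
  unfold Gp
  have hp := sp_pos.ne'
  have hs := s2_pos.ne'
  simp only [id_eq]
  field_simp
  ring_nf
  try simp only [sp2, sp3, sp4, sp5, sp6, sp7, sp8, ss2, ss3, ss4, ss5, ss6, ss7, ss8]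
  try ring_nf

lemma Hm_hasDerivAt (u : ℝ) : HasDerivAt Hm (Gm u) u := by
  have t1 := (((hasDerivAt_id u).mul (erf_hasDerivAt u)).add
    ((expsq_hasDerivAt u).const_mul (1 / Real.sqrt π))).const_mul (1 / (2 * Real.sqrt π))
  have t2 := (((erfs_hasDerivAt u).pow 2).const_mul
    (1 / (2 * (Real.sqrt 2 * Real.sqrt π)) * (Real.sqrt π / (2 * Real.sqrt 2))))
  have t3 := (((hasDerivAt_id u).sub ((erfs_hasDerivAt u).const_mul
    (Real.sqrt π / Real.sqrt 2))).const_mul (1 / (2 * (Real.sqrt 2 * Real.sqrt π))))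
  have h := (t1.sub t2).add t3
  refine h.congr_deriv ?_
  symm
  unfold Gm
  have hp := sp_pos.ne'
  have hs := s2_pos.ne'
  simp only [id_eq]
  field_simp
  ring_nf
  try simp only [sp2, sp3, sp4, sp5, sp6, sp7, sp8, ss2, ss3, ss4, ss5, ss6, ss7, ss8]
  try ring_nf
lemma sp9 : Real.sqrt π ^ 9 = π ^ 4 * Real.sqrt π := by
  rw [show Real.sqrt π ^ 9 = (Real.sqrt π ^ 2) ^ 4 * Real.sqrt π by ring, sp2]

lemma ss9 : Real.sqrt 2 ^ 9 = 16 * Real.sqrt 2 := by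
  rw [show Real.sqrt 2 ^ 9 = (Real.sqrt 2 ^ 2) ^ 4 * Real.sqrt 2 by ring, ss2]; norm_num

lemma sp10 : Real.sqrt π ^ 10 = π ^ 5 := by
  rw [show Real.sqrt π ^ 10 = (Real.sqrt π ^ 2) ^ 5 by ring, sp2]

lemma ss10 : Real.sqrt 2 ^ 10 = 32 := by
  rw [show Real.sqrt 2 ^ 10 = (Real.sqrt 2 ^ 2) ^ 5 by ring, ss2]; norm_num

lemma sp11 : Real.sqrt π ^ 11 = π ^ 5 * Real.sqrt π := by
  rw [show Real.sqrt π ^ 11 = (Real.sqrt π ^ 2) ^ 5 * Real.sqrt π by ring, sp2]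

lemma ss11 : Real.sqrt 2 ^ 11 = 32 * Real.sqrt 2 := by
  rw [show Real.sqrt 2 ^ 11 = (Real.sqrt 2 ^ 2) ^ 5 * Real.sqrt 2 by ring, ss2]; norm_num

lemma sp12 : Real.sqrt π ^ 12 = π ^ 6 := by
  rw [show Real.sqrt π ^ 12 = (Real.sqrt π ^ 2) ^ 6 by ring, sp2]

lemma ss12 : Real.sqrt 2 ^ 12 = 64 := by
  rw [show Real.sqrt 2 ^ 12 = (Real.sqrt 2 ^ 2) ^ 6 by ring, ss2]; norm_num

lemma sp13 : Real.sqrt π ^ 13 = π ^ 6 * Real.sqrt π := by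
  rw [show Real.sqrt π ^ 13 = (Real.sqrt π ^ 2) ^ 6 * Real.sqrt π by ring, sp2]

lemma ss13 : Real.sqrt 2 ^ 13 = 64 * Real.sqrt 2 := by
  rw [show Real.sqrt 2 ^ 13 = (Real.sqrt 2 ^ 2) ^ 6 * Real.sqrt 2 by ring, ss2]; norm_num

lemma sp14 : Real.sqrt π ^ 14 = π ^ 7 := by
  rw [show Real.sqrt π ^ 14 = (Real.sqrt π ^ 2) ^ 7 by ring, sp2]

lemma ss14 : Real.sqrt 2 ^ 14 = 128 := by
  rw [show Real.sqrt 2 ^ 14 = (Real.sqrt 2 ^ 2) ^ 7 by ring, ss2]; norm_num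

lemma sp15 : Real.sqrt π ^ 15 = π ^ 7 * Real.sqrt π := by
  rw [show Real.sqrt π ^ 15 = (Real.sqrt π ^ 2) ^ 7 * Real.sqrt π by ring, sp2]

lemma ss15 : Real.sqrt 2 ^ 15 = 128 * Real.sqrt 2 := by
  rw [show Real.sqrt 2 ^ 15 = (Real.sqrt 2 ^ 2) ^ 7 * Real.sqrt 2 by ring, ss2]; norm_num

lemma sp16 : Real.sqrt π ^ 16 = π ^ 8 := by
  rw [show Real.sqrt π ^ 16 = (Real.sqrt π ^ 2) ^ 8 by ring, sp2]

lemma ss16 : Real.sqrt 2 ^ 16 = 256 := by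
  rw [show Real.sqrt 2 ^ 16 = (Real.sqrt 2 ^ 2) ^ 8 by ring, ss2]; norm_num
lemma rsign_mul_self (u : ℝ) : Real.sign u * u = |u| := by
  rcases lt_trichotomy u 0 with h | h | h
  · rw [Real.sign_of_neg h, abs_of_neg h]; ring
  · simp [h]
  · rw [Real.sign_of_pos h, abs_of_pos h]; ring

lemma kernel_eq (x y : ℝ) : Skern x y ^ 2 + Ikern x y * Dkern x y = Fk (x - y) := by
  have h2π : Real.sqrt (2 * π) = Real.sqrt 2 * Real.sqrt π := Real.sqrt_mul (by norm_num) π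
  have hE : Real.exp (-(x - y) ^ 2 / 2) * Real.exp (-(x - y) ^ 2 / 2)
      = Real.exp (-(x - y) ^ 2) := by rw [← Real.exp_add]; ring_nf
  have hsgn := rsign_mul_self (x - y)
  have hp := sp_pos.ne'
  have hs := s2_pos.ne'
  have key2 : Skern x y ^ 2
      = 1 / (2 * (Real.sqrt π * Real.sqrt π)) * Real.exp (-(x - y) ^ 2) := by
    unfold Skern
    rw [h2π, ← hE]
    field_simp
    ring_nf
    try simp only [sp2, sp3, sp4, sp5, sp6, sp7, sp8, ss2, ss3, ss4, ss5, ss6, ss7, ss8]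
    try ring_nf
  have key : Ikern x y * Dkern x y
      = 1 / (2 * (Real.sqrt 2 * Real.sqrt π))
          * ((x - y) * erf ((x - y) / Real.sqrt 2) * Real.exp (-(x - y) ^ 2 / 2))
        - 1 / (2 * (Real.sqrt 2 * Real.sqrt π)) * (|x - y| * Real.exp (-(x - y) ^ 2 / 2)) := by
    unfold Ikern Dkern
    rw [h2π, ← hsgn]
    field_simp
    ring_nf
    try simp only [sp2, sp3, sp4, sp5, sp6, sp7, sp8, ss2, ss3, ss4, ss5, ss6, ss7, ss8]
    try ring_nf
  rw [key2, key]
  unfold Fk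
  ring

lemma erfs_cont : Continuous fun u : ℝ => erf (u / Real.sqrt 2) :=
  erf_cont.comp (continuous_id.div_const _)

lemma Fk_cont : Continuous Fk := by
  unfold Fk
  exact ((continuous_const.mul (by continuity)).add (continuous_const.mul
    ((continuous_id.mul erfs_cont).mul (by continuity)))).sub
    (continuous_const.mul (continuous_abs.mul (by continuity)))

lemma Gp_cont : Continuous Gp := by
  unfold Gp
  exact (((continuous_const.mul erf_cont).sub (continuous_const.mul
    (erfs_cont.mul (by continuity)))).sub
    (continuous_const.mul (continuous_const.sub (by continuity))))

lemma Gm_cont : Continuous Gm := by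
  unfold Gm
  exact (((continuous_const.mul erf_cont).sub (continuous_const.mul
    (erfs_cont.mul (by continuity)))).add
    (continuous_const.mul (continuous_const.sub (by continuity))))

lemma inner_int (R x : ℝ) :
    (∫ y in (-R)..R, (Skern x y ^ 2 + Ikern x y * Dkern x y)) = Gk (x + R) - Gk (x - R) := by
  simp only [kernel_eq]
  have hd : ∀ y ∈ Set.uIcc (-R) R, HasDerivAt (fun y => -Gk (x - y)) (Fk (x - y)) y := by
    intro y _
    have h := (Gk_hasDerivAt (x - y)).comp y ((hasDerivAt_id y).const_sub x)
    exact h.neg.congr_deriv (by ring)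
  rw [intervalIntegral.integral_eq_sub_of_hasDerivAt hd
    ((Fk_cont.comp (continuous_const.sub continuous_id)).intervalIntegrable _ _)]
  simp only [sub_neg_eq_add]
  ring

lemma Gk_eq_Gp {u : ℝ} (hu : 0 ≤ u) : Gk u = Gp u := by
  unfold Gk Gp; rw [phi_nonneg hu]

lemma Gk_eq_Gm {u : ℝ} (hu : u ≤ 0) : Gk u = Gm u := by
  unfold Gk Gm; rw [phi_nonpos hu]; ring

lemma outer_int (R : ℝ) (hR : 0 ≤ R) :
    (∫ x in (-R)..R, (Gk (x + R) - Gk (x - R)))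
      = Hp (2 * R) - Hm 0 - (Hp 0 - Hm (-(2 * R))) := by
  have hRR : -R ≤ R := by linarith
  rw [intervalIntegral.integral_congr (g := fun x => Gp (x + R) - Gm (x - R))
    (by intro x hx
        rw [Set.uIcc_of_le hRR] at hx
        simp only
        rw [Gk_eq_Gp (by linarith [hx.1] : 0 ≤ x + R), Gk_eq_Gm (by linarith [hx.2] : x - R ≤ 0)])]
  have hd : ∀ x ∈ Set.uIcc (-R) R,
      HasDerivAt (fun x => Hp (x + R) - Hm (x - R)) (Gp (x + R) - Gm (x - R)) x := by
    intro x _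
    have h1 := (Hp_hasDerivAt (x + R)).comp x ((hasDerivAt_id x).add_const R)
    have h2 := (Hm_hasDerivAt (x - R)).comp x ((hasDerivAt_id x).sub_const R)
    exact (h1.sub h2).congr_deriv (by ring)
  rw [intervalIntegral.integral_eq_sub_of_hasDerivAt hd
    (((Gp_cont.comp (by continuity : Continuous fun x : ℝ => x + R)).sub
      (Gm_cont.comp (by continuity : Continuous fun x : ℝ => x - R))).intervalIntegrable _ _)]
  rw [show R + R = 2 * R by ring, show R - R = (0:ℝ) by ring,
    show -R + R = (0:ℝ) by ring, show -R - R = -(2 * R) by ring]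
theorem number_variance_real_eigenvalues_GinOE_origin (R : ℝ) (hR : 0 ≤ R) :
    Real.sqrt (2 / π) * R
      - ∫ x in (-R)..R, ∫ y in (-R)..R, (Skern x y ^ 2 + Ikern x y * Dkern x y)
      = 2 * Real.sqrt (2 / π) * R - (2 / Real.sqrt π) * R * erf (2 * R)
        - (1 / 2) * erf (Real.sqrt 2 * R) + (1 / 4) * erf (Real.sqrt 2 * R) ^ 2
        + (1 / π) * (1 - Real.exp (-4 * R ^ 2)) := by
  have hp := sp_pos.ne'
  have hs := s2_pos.ne'
  simp only [inner_int]
  rw [outer_int R hR]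
  unfold Hp Hm
  have harg : 2 * R / Real.sqrt 2 = Real.sqrt 2 * R := by
    rw [div_eq_iff hs]; linear_combination (-R) * sq2
  have harg2 : -(2 * R) / Real.sqrt 2 = -(Real.sqrt 2 * R) := by
    rw [neg_div, harg]
  have hexp : Real.exp (-(2 * R) ^ 2) = Real.exp (-4 * R ^ 2) := by
    congr 1; ring
  have hexp2 : Real.exp (-(-(2 * R)) ^ 2) = Real.exp (-4 * R ^ 2) := by
    congr 1; ring
  have h0 : Real.exp (-(0:ℝ) ^ 2) = 1 := by norm_num
  have h0' : (0:ℝ) / Real.sqrt 2 = 0 := by simp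
  have h2p : Real.sqrt (2 / π) = Real.sqrt 2 / Real.sqrt π :=
    Real.sqrt_div (by norm_num) π
  rw [harg, harg2, hexp, hexp2, h0, h0', erf_zero, erf_neg (2 * R),
    erf_neg (Real.sqrt 2 * R), h2p]
  have hπ : π ≠ 0 := pi_ne_zero
  field_simp
  ring_nf
  try simp only [sp2, sp3, sp4, sp5, sp6, sp7, sp8, sp9, sp10, sp11, sp12, sp13, sp14, sp15, sp16, ss2, ss3, ss4, ss5, ss6, ss7, ss8, ss9, ss10, ss11, ss12, ss13, ss14, ss15, ss16]
  try ring_nf
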